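/- arXiv:2311.10583 — 2 statements merged into one kernel-verified Lean document; each statement's English description precedes it below -/
import Mathlib

section
/- For any formula A of the bimodal language L₂, the following are equivalent: (1) GR• ⊢ A; (2) GR ⊢ A; (3) A is valid on all non-trivial GR°-frames; (4) A is valid on all ■-serial GR°-frames. In particular, GR• is an alternative axiomatization of GR, and GR has the finite frame property with respect to non-trivial GR°-frames. -/
/-- Formulas of the bimodal language `L₂`: countably many propositional
variables, `⊥`, `¬`, `∨`, and two modal operators `□` (`box`) and `■` (`bb`). -/
inductive Formula : Type
  | var : ℕ → Formula
  | falsum : Formula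
  | neg : Formula → Formula
  | or : Formula → Formula → Formula
  | box : Formula → Formula
  | bb : Formula → Formula

namespace Formula

/-- `A → B` is defined as `¬A ∨ B`. -/
def imp (A B : Formula) : Formula := (A.neg).or B

/-- `A ∧ B` is defined as `¬(¬A ∨ ¬B)`. -/
def and (A B : Formula) : Formula := ((A.neg).or B.neg).neg

/-- `◇A` abbreviates `¬□¬A`. -/
def dia (A : Formula) : Formula := ((A.neg).box).neg

end Formula

/-- Propositional evaluation: variables and formulas of the form `□A`, `■A`
are treated as atoms whose truth value is given by `v`. -/
def evalProp (v : Formula → Bool) : Formula → Bool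
  | .var n => v (.var n)
  | .falsum => false
  | .neg A => !(evalProp v A)
  | .or A B => evalProp v A || evalProp v B
  | .box A => v (.box A)
  | .bb A => v (.bb A)

/-- Propositional tautologies of the bimodal language `L₂`. -/
def Taut (A : Formula) : Prop := ∀ v : Formula → Bool, evalProp v A = true

/-- The logic GR. -/
inductive GR : Formula → Prop
  | taut {A : Formula} : Taut A → GR A
  | k {A B : Formula} : GR (((A.imp B).box).imp ((A.box).imp (B.box)))
  | loeb {A : Formula} : GR ((((A.box).imp A).box).imp (A.box))
  | bbBox {A : Formula} : GR ((A.bb).imp (A.box))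
  | boxBb {A : Formula} : GR ((A.box).imp ((A.bb).box))
  | ros {A : Formula} : GR ((A.box).imp ((Formula.falsum.box).or (A.bb)))
  | diaBb {A : Formula} : GR (((A.bb).dia).imp (A.dia))
  | mp {A B : Formula} : GR (A.imp B) → GR A → GR B
  | nec {A : Formula} : GR A → GR (A.box)
  | boxElim {A : Formula} : GR (A.box) → GR A

/-- The logic GRbullet. -/
inductive GRbullet : Formula → Prop
  | taut {A : Formula} : Taut A → GRbullet A
  | k {A B : Formula} : GRbullet (((A.imp B).box).imp ((A.box).imp (B.box)))
  | loeb {A : Formula} : GRbullet ((((A.box).imp A).box).imp (A.box))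
  | bbBox {A : Formula} : GRbullet ((A.bb).imp (A.box))
  | boxBb {A : Formula} : GRbullet ((A.box).imp ((A.bb).box))
  | ros {A : Formula} : GRbullet ((A.box).imp ((Formula.falsum.box).or (A.bb)))
  | diaBb {A : Formula} : GRbullet (((A.bb).dia).imp (A.dia))
  | mp {A B : Formula} : GRbullet (A.imp B) → GRbullet A → GRbullet B
  | nec {A : Formula} : GRbullet A → GRbullet (A.box)
  | bbnec {A : Formula} : GRbullet A → GRbullet (A.bb)
  | rosser {A : Formula} : GRbullet (A.neg) → GRbullet ((A.bb).neg)

/-- A `GR°`-frame: a nonempty set of worlds `W`, a transitive conversely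
well-founded relation `⊏` (`lt`), and for each formula `B` a relation
`≺_B` (`prec B`) satisfying the four frame conditions. -/
structure GRFrame where
  W : Type
  nonempty : Nonempty W
  lt : W → W → Prop
  lt_trans : ∀ {x y z : W}, lt x y → lt y z → lt x z
  /-- `⊏` is conversely well-founded. -/
  cwf : WellFounded (fun x y : W => lt y x)
  prec : Formula → W → W → Prop
  lt_to_prec : ∀ {B : Formula} {x y : W}, lt x y → prec B x y
  lt_prec_lt : ∀ {B : Formula} {x y z : W}, lt x y → prec B y z → lt x z
  prec_lt_lt : ∀ {B : Formula} {x y z : W}, prec B x y → lt x z → lt x y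
  lt_succ : ∀ {B : Formula} {x y : W}, lt x y → ∃ z : W, prec B y z ∧ lt x z

/-- A satisfaction relation on a `GR°`-frame. -/
structure GRSat (F : GRFrame) where
  frc : F.W → Formula → Prop
  frc_falsum : ∀ w : F.W, ¬ frc w Formula.falsum
  frc_neg : ∀ (w : F.W) (A : Formula), frc w A.neg ↔ ¬ frc w A
  frc_or : ∀ (w : F.W) (A B : Formula), frc w (A.or B) ↔ (frc w A ∨ frc w B)
  frc_box : ∀ (w : F.W) (B : Formula), frc w B.box ↔ ∀ x : F.W, F.lt w x → frc x B
  frc_bb : ∀ (w : F.W) (B : Formula), frc w B.bb ↔ ∀ x : F.W, F.prec B w x → frc x B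

/-- `A` is valid on the frame `F`: it holds at every world under every
satisfaction relation on `F`. -/
def ValidOn (F : GRFrame) (A : Formula) : Prop :=
  ∀ (S : GRSat F) (w : F.W), S.frc w A

/-- A frame is non-trivial iff it has a root `r` (w.r.t. `⊏`) and some world `w ≠ r`. -/
def GRFrame.NonTrivial (F : GRFrame) : Prop :=
  ∃ r w : F.W, (∀ x : F.W, x ≠ r → F.lt r x) ∧ r ≠ w

/-- A frame is `■`-serial iff every `≺_B` is serial. -/
def GRFrame.Serial (F : GRFrame) : Prop :=
  ∀ (B : Formula) (x : F.W), ∃ y : F.W, F.prec B x y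

open Formula Classical

/-! ### Syntactic infrastructure for GRbullet -/

namespace GRbullet

theorem mp2 {A B C : Formula} (h : GRbullet (A.imp (B.imp C)))
    (hA : GRbullet A) (hB : GRbullet B) : GRbullet C := (h.mp hA).mp hB

theorem imp_self (A : Formula) : GRbullet (A.imp A) :=
  .taut (by intro v; simp only [Formula.imp, evalProp]
            cases evalProp v A <;> rfl)

theorem imp_trans {A B C : Formula} (h1 : GRbullet (A.imp B)) (h2 : GRbullet (B.imp C)) :
    GRbullet (A.imp C) := by
  have t : GRbullet ((A.imp B).imp ((B.imp C).imp (A.imp C))) := .taut (by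
    intro v; simp only [Formula.imp, evalProp]
    cases evalProp v A <;> cases evalProp v B <;> cases evalProp v C <;> rfl)
  exact (t.mp h1).mp h2

theorem contrapose {A B : Formula} (h : GRbullet (A.imp B)) :
    GRbullet ((B.neg).imp (A.neg)) := by
  have t : GRbullet ((A.imp B).imp ((B.neg).imp (A.neg))) := .taut (by
    intro v; simp only [Formula.imp, evalProp]
    cases evalProp v A <;> cases evalProp v B <;> rfl)
  exact t.mp h

theorem neg_of_imp_falsum {A : Formula} (h : GRbullet (A.imp Formula.falsum)) :
    GRbullet (A.neg) := by
  have t : GRbullet ((A.imp Formula.falsum).imp (A.neg)) := .taut (by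
    intro v; simp only [Formula.imp, evalProp]
    cases evalProp v A <;> rfl)
  exact t.mp h

theorem of_negneg_imp_falsum {A : Formula} (h : GRbullet ((A.neg).imp Formula.falsum)) :
    GRbullet A := by
  have t : GRbullet (((A.neg).imp Formula.falsum).imp A) := .taut (by
    intro v; simp only [Formula.imp, evalProp]
    cases evalProp v A <;> rfl)
  exact t.mp h

/-- from `⊢ A → B` infer `⊢ □A → □B` -/
theorem box_mp {A B : Formula} (h : GRbullet (A.imp B)) :
    GRbullet ((A.box).imp (B.box)) := GRbullet.k.mp (h.nec)

/-- `⊢ □A → (□B → □(A ∧ B))` -/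
theorem box_and (A B : Formula) :
    GRbullet ((A.box).imp ((B.box).imp ((A.and B).box))) := by
  have t : GRbullet (A.imp (B.imp (A.and B))) := .taut (by
    intro v; simp only [Formula.imp, Formula.and, evalProp]
    cases evalProp v A <;> cases evalProp v B <;> rfl)
  have h1 : GRbullet ((A.box).imp ((B.imp (A.and B)).box)) := box_mp t
  exact imp_trans h1 GRbullet.k

/-- generic tautology helpers (atoms kept opaque) -/
theorem taut_and_left (P Q : Formula) : GRbullet ((P.and Q).imp P) := .taut (by
  intro v; simp only [Formula.imp, Formula.and, evalProp]
  cases evalProp v P <;> cases evalProp v Q <;> rfl)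

theorem taut_and_right (P Q : Formula) : GRbullet ((P.and Q).imp Q) := .taut (by
  intro v; simp only [Formula.imp, Formula.and, evalProp]
  cases evalProp v P <;> cases evalProp v Q <;> rfl)

theorem taut_g1 (P Q R : Formula) :
    GRbullet ((P.imp Q).imp (R.imp (P.imp (R.and Q)))) := .taut (by
  intro v; simp only [Formula.imp, Formula.and, evalProp]
  cases evalProp v P <;> cases evalProp v Q <;> cases evalProp v R <;> rfl)

/-- transitivity axiom 4 is derivable -/
theorem four (A : Formula) : GRbullet ((A.box).imp ((A.box).box)) := by
  have t1 : GRbullet (((A.and (A.box)).box).imp (A.box)) := box_mp (taut_and_left _ _)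
  have t2 : GRbullet (A.imp ((((A.and (A.box))).box).imp (A.and (A.box)))) :=
    (taut_g1 ((A.and (A.box)).box) (A.box) A).mp t1
  have t3 := box_mp t2
  have t5 : GRbullet ((A.box).imp ((A.and (A.box)).box)) := imp_trans t3 GRbullet.loeb
  have t6 : GRbullet (((A.and (A.box)).box).imp ((A.box).box)) :=
    box_mp (taut_and_right _ _)
  exact imp_trans t5 t6

end GRbullet

/-! ### Finite-set derivability -/

def conj : List Formula → Formula
  | [] => Formula.falsum.neg
  | C :: L => C.and (conj L)

/-- `Γ ⊢ C` -/
def Sdt (Γ : List Formula) (C : Formula) : Prop := GRbullet ((conj Γ).imp C)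

theorem sdt_of {Γ : List Formula} {C : Formula} (h : GRbullet C) : Sdt Γ C := by
  have t : GRbullet (C.imp ((conj Γ).imp C)) := .taut (by
    intro v; simp only [Formula.imp, evalProp]
    cases evalProp v C <;> cases evalProp v (conj Γ) <;> rfl)
  exact t.mp h

theorem sdt_mp {Γ : List Formula} {A B : Formula} (h : Sdt Γ (A.imp B)) (hA : Sdt Γ A) :
    Sdt Γ B := by
  have t : GRbullet (((conj Γ).imp (A.imp B)).imp (((conj Γ).imp A).imp ((conj Γ).imp B))) :=
    .taut (by
      intro v; simp only [Formula.imp, evalProp]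
      cases evalProp v (conj Γ) <;> cases evalProp v A <;> cases evalProp v B <;> rfl)
  exact (t.mp h).mp hA

theorem sdt_mp2 {Γ : List Formula} {A B C : Formula} (h : Sdt Γ (A.imp (B.imp C)))
    (hA : Sdt Γ A) (hB : Sdt Γ B) : Sdt Γ C := sdt_mp (sdt_mp h hA) hB

theorem sdt_mem {Γ : List Formula} {C : Formula} (h : C ∈ Γ) : Sdt Γ C := by
  induction Γ with
  | nil => cases h
  | cons D L ih =>
    rcases List.mem_cons.mp h with rfl | h'
    · exact .taut (by
        intro v; simp only [conj, Formula.imp, Formula.and, evalProp]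
        cases evalProp v C <;> cases evalProp v (conj L) <;> rfl)
    · have step : GRbullet ((conj (D :: L)).imp (conj L)) := .taut (by
        intro v; simp only [conj, Formula.imp, Formula.and, evalProp]
        cases evalProp v D <;> cases evalProp v (conj L) <;> rfl)
      exact GRbullet.imp_trans step (ih h')

theorem sdt_conj {Γ Δ : List Formula} (h : ∀ C ∈ Δ, Sdt Γ C) : Sdt Γ (conj Δ) := by
  induction Δ with
  | nil => exact sdt_of (.taut (by intro v; simp only [conj, Formula.imp, evalProp]; rfl))
  | cons D L ih =>
    have hD := h D List.mem_cons_self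
    have hL := ih (fun C hC => h C (List.mem_cons_of_mem _ hC))
    have t : GRbullet (D.imp ((conj L).imp (conj (D :: L)))) := .taut (by
      intro v; simp only [conj, Formula.imp, Formula.and, evalProp]
      cases evalProp v D <;> cases evalProp v (conj L) <;> rfl)
    exact sdt_mp2 (sdt_of t) hD hL

theorem sdt_weak {Γ Δ : List Formula} {C : Formula} (hsub : ∀ x ∈ Γ, x ∈ Δ)
    (h : Sdt Γ C) : Sdt Δ C :=
  GRbullet.imp_trans (sdt_conj (fun D hD => sdt_mem (hsub D hD))) h

theorem sdt_dd {Γ : List Formula} {C D : Formula} (h : Sdt (C :: Γ) D) :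
    Sdt Γ (C.imp D) := by
  have t : GRbullet (((conj (C :: Γ)).imp D).imp ((conj Γ).imp (C.imp D))) := .taut (by
    intro v; simp only [conj, Formula.imp, Formula.and, evalProp]
    cases evalProp v C <;> cases evalProp v (conj Γ) <;> cases evalProp v D <;> rfl)
  exact t.mp h

def InconL (Γ : List Formula) : Prop := Sdt Γ Formula.falsum
def ConL (Γ : List Formula) : Prop := ¬ InconL Γ

theorem sdt_both {Γ : List Formula} {C : Formula} (h1 : Sdt Γ C) (h2 : Sdt Γ (C.neg)) :
    InconL Γ := by
  have t : GRbullet (C.imp ((C.neg).imp Formula.falsum)) := .taut (by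
    intro v; simp only [Formula.imp, evalProp]
    cases evalProp v C <;> rfl)
  exact sdt_mp2 (sdt_of t) h1 h2

theorem incon_of_mem {Γ : List Formula} {C : Formula} (h1 : C ∈ Γ) (h2 : C.neg ∈ Γ) :
    InconL Γ := sdt_both (sdt_mem h1) (sdt_mem h2)

theorem con_cases {Γ : List Formula} (h : ConL Γ) (C : Formula) :
    ConL (C :: Γ) ∨ ConL (C.neg :: Γ) := by
  by_contra hcon
  push_neg at hcon
  have h1 : Sdt Γ (C.imp Formula.falsum) := sdt_dd (not_not.mp hcon.1)
  have h2 : Sdt Γ ((C.neg).imp Formula.falsum) := sdt_dd (not_not.mp hcon.2)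
  have t : GRbullet ((C.imp Formula.falsum).imp (((C.neg).imp Formula.falsum).imp
      Formula.falsum)) := .taut (by
    intro v; simp only [Formula.imp, evalProp]
    cases evalProp v C <;> rfl)
  exact h (sdt_mp2 (sdt_of t) h1 h2)

theorem con_sub {Γ Δ : List Formula} (hsub : ∀ x ∈ Γ, x ∈ Δ) (h : ConL Δ) : ConL Γ :=
  fun hic => h (sdt_weak hsub hic)

/-! ### boxed lists and the Löb-style existence core -/

def deltaL : List Formula → List Formula
  | [] => []
  | E :: Es => E.box :: E :: deltaL Es

theorem mem_deltaL {x : Formula} {Es : List Formula} :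
    x ∈ deltaL Es ↔ ∃ E ∈ Es, x = E.box ∨ x = E := by
  induction Es with
  | nil => simp [deltaL]
  | cons E Es ih => simp [deltaL, ih]; aesop

def boxesL (Es : List Formula) : List Formula := Es.map Formula.box

theorem boxesL_imp_box_deltaL (Es : List Formula) :
    GRbullet ((conj (boxesL Es)).imp ((conj (deltaL Es)).box)) := by
  induction Es with
  | nil =>
    have h : GRbullet ((conj (deltaL [])).box) := GRbullet.nec (.taut (by
      intro v; simp only [deltaL, conj, evalProp]; rfl))
    exact sdt_of h
  | cons E Es ih =>
    -- conj (boxesL (E::Es)) = □E ∧ conj (boxesL Es)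
    -- goal: → □(□E ∧ (E ∧ conj (deltaL Es)))
    have h1 : Sdt (boxesL (E :: Es)) (E.box) := sdt_mem (by simp [boxesL])
    have h2 : Sdt (boxesL (E :: Es)) ((E.box).box) := sdt_mp (sdt_of (GRbullet.four E)) h1
    have h3 : Sdt (boxesL (E :: Es)) ((conj (deltaL Es)).box) := by
      have : Sdt (boxesL (E :: Es)) (conj (boxesL Es)) :=
        sdt_conj (fun C hC => sdt_mem (by simp [boxesL] at hC ⊢; tauto))
      exact sdt_mp (sdt_of ih) this
    have h4 : Sdt (boxesL (E :: Es)) ((E.and (conj (deltaL Es))).box) :=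
      sdt_mp2 (sdt_of (GRbullet.box_and _ _)) h1 h3
    have h5 : Sdt (boxesL (E :: Es)) (((E.box).and (E.and (conj (deltaL Es)))).box) :=
      sdt_mp2 (sdt_of (GRbullet.box_and _ _)) h2 h4
    exact h5

theorem sdt_boxed {Es : List Formula} {C : Formula} (h : Sdt (deltaL Es) C) :
    Sdt (boxesL Es) (C.box) :=
  GRbullet.imp_trans (boxesL_imp_box_deltaL Es) (GRbullet.box_mp h)

/-- The Löb-style core: if `Δ(Es) ∪ {¬χ, □χ}` is inconsistent then the boxes
of `Es` prove `□χ`. -/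
theorem gl_core {Es : List Formula} {χ : Formula}
    (h : InconL (deltaL Es ++ [χ.neg, χ.box])) : Sdt (boxesL Es) (χ.box) := by
  have h1 : Sdt (χ.neg :: (χ.box) :: deltaL Es) Formula.falsum :=
    sdt_weak (by intro x hx; simp at hx ⊢; tauto) h
  have h2 : Sdt (deltaL Es) ((χ.box).imp ((χ.neg).imp Formula.falsum)) := sdt_dd (sdt_dd h1)
  have h3 : Sdt (deltaL Es) ((χ.box).imp χ) := by
    have t : GRbullet (((χ.box).imp ((χ.neg).imp Formula.falsum)).imp ((χ.box).imp χ)) :=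
      .taut (by
        intro v; simp only [Formula.imp, evalProp]
        cases v (χ.box) <;> cases evalProp v χ <;> rfl)
    exact sdt_mp (sdt_of t) h2
  have h4 : Sdt (boxesL Es) ((((χ.box).imp χ).box)) := sdt_boxed h3
  exact sdt_mp (sdt_of GRbullet.loeb) h4

/-! ### The adequate set Φ -/

deriving instance DecidableEq for Formula

def sub : Formula → Finset Formula
  | .var n => {Formula.var n}
  | .falsum => {Formula.falsum}
  | .neg A => insert (Formula.neg A) (sub A)
  | .or A B => insert (Formula.or A B) (sub A ∪ sub B)
  | .box A => insert (Formula.box A) (sub A)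
  | .bb A => insert (Formula.bb A) (sub A)

theorem mem_sub_self (A : Formula) : A ∈ sub A := by
  cases A <;> simp [sub]

theorem sub_trans {C D : Formula} (h : C ∈ sub D) : sub C ⊆ sub D := by
  induction D with
  | var n => simp [sub] at h; subst h; simp [sub]
  | falsum => simp [sub] at h; subst h; simp [sub]
  | neg A ih =>
    simp [sub] at h
    rcases h with rfl | h
    · exact Finset.Subset.refl _
    · exact (ih h).trans (by simp [sub])
  | or A B ihA ihB =>
    simp [sub] at h
    rcases h with rfl | h | h
    · exact Finset.Subset.refl _
    · exact (ihA h).trans (by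
        intro x hx; simp only [sub, Finset.mem_insert, Finset.mem_union]; tauto)
    · exact (ihB h).trans (by
        intro x hx; simp only [sub, Finset.mem_insert, Finset.mem_union]; tauto)
  | box A ih =>
    simp [sub] at h
    rcases h with rfl | h
    · exact Finset.Subset.refl _
    · exact (ih h).trans (by simp [sub])
  | bb A ih =>
    simp [sub] at h
    rcases h with rfl | h
    · exact Finset.Subset.refl _
    · exact (ih h).trans (by simp [sub])

def quad : Formula → Finset Formula
  | .bb B => {(B.neg).box, B.box, ((B.bb).neg).box, (B.bb).box}
  | _ => ∅

def base (A : Formula) : Finset Formula :=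
  insert A (insert (Formula.falsum.box) ((sub A).biUnion quad))

def Phi (A : Formula) : Finset Formula := (base A).biUnion sub

theorem phi_closed {A C : Formula} (h : C ∈ Phi A) : sub C ⊆ Phi A := by
  simp only [Phi, Finset.mem_biUnion] at h ⊢
  obtain ⟨b, hb, hCb⟩ := h
  intro x hx
  exact Finset.mem_biUnion.mpr ⟨b, hb, sub_trans hCb hx⟩

theorem mem_phi_of_sub {A C D : Formula} (hC : C ∈ Phi A) (hD : D ∈ sub C) : D ∈ Phi A :=
  phi_closed hC hD

theorem self_mem_phi (A : Formula) : A ∈ Phi A :=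
  Finset.mem_biUnion.mpr ⟨A, by simp [base], mem_sub_self A⟩

theorem boxbot_mem_phi (A : Formula) : Formula.falsum.box ∈ Phi A :=
  Finset.mem_biUnion.mpr ⟨Formula.falsum.box, by simp [base], mem_sub_self _⟩

theorem bot_mem_phi (A : Formula) : Formula.falsum ∈ Phi A :=
  mem_phi_of_sub (boxbot_mem_phi A) (by simp [sub])

theorem unbox_mem_phi {A E : Formula} (h : E.box ∈ Phi A) : E ∈ Phi A :=
  mem_phi_of_sub h (by simp [sub, mem_sub_self])

theorem unneg_mem_phi {A E : Formula} (h : E.neg ∈ Phi A) : E ∈ Phi A :=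
  mem_phi_of_sub h (by simp [sub, mem_sub_self])

theorem unor_mem_phi {A E F : Formula} (h : Formula.or E F ∈ Phi A) :
    E ∈ Phi A ∧ F ∈ Phi A :=
  ⟨mem_phi_of_sub h (by
      simp only [sub, Finset.mem_insert, Finset.mem_union]
      exact Or.inr (Or.inl (mem_sub_self _))),
   mem_phi_of_sub h (by
      simp only [sub, Finset.mem_insert, Finset.mem_union]
      exact Or.inr (Or.inr (mem_sub_self _)))⟩

/-- every `■B` in `Φ A` already occurs in `sub A` -/
theorem bb_mem_sub {A B : Formula} (h : Formula.bb B ∈ Phi A) : Formula.bb B ∈ sub A := by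
  simp only [Phi, Finset.mem_biUnion] at h
  obtain ⟨b, hb, hBb⟩ := h
  simp only [base, Finset.mem_insert, Finset.mem_biUnion] at hb
  rcases hb with rfl | rfl | ⟨C, hC, hq⟩
  · exact hBb
  · simp only [sub, Finset.mem_insert, Finset.mem_singleton] at hBb
    rcases hBb with h | h <;> exact absurd h (by simp)
  · -- b ∈ quad C, C ∈ sub A
    cases C with
    | bb B₀ =>
      have hB₀sub : sub (Formula.bb B₀) ⊆ sub A := sub_trans hC
      have hB₀A : sub B₀ ⊆ sub A := fun x hx => hB₀sub (by
        simp only [sub, Finset.mem_insert]; exact Or.inr hx)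
      simp only [quad, Finset.mem_insert, Finset.mem_singleton] at hq
      rcases hq with rfl | rfl | rfl | rfl
      · simp only [sub, Finset.mem_insert, Finset.mem_singleton] at hBb
        rcases hBb with h | h | h
        · exact absurd h (by simp)
        · exact absurd h (by simp)
        · exact hB₀A h
      · simp only [sub, Finset.mem_insert] at hBb
        rcases hBb with h | h
        · exact absurd h (by simp)
        · exact hB₀A h
      · simp only [sub, Finset.mem_insert] at hBb
        rcases hBb with h | h | h | h
        · exact absurd h (by simp)
        · exact absurd h (by simp)
        · rw [h]; exact hC
        · exact hB₀A h
      · simp only [sub, Finset.mem_insert] at hBb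
        rcases hBb with h | h | h
        · exact absurd h (by simp)
        · rw [h]; exact hC
        · exact hB₀A h
    | var n => simp [quad] at hq
    | falsum => simp [quad] at hq
    | neg _ => simp [quad] at hq
    | or _ _ => simp [quad] at hq
    | box _ => simp [quad] at hq

theorem quad_mem_phi {A B : Formula} (h : Formula.bb B ∈ Phi A) :
    (B.neg).box ∈ Phi A ∧ B.box ∈ Phi A ∧ ((B.bb).neg).box ∈ Phi A ∧ (B.bb).box ∈ Phi A := by
  have hs := bb_mem_sub h
  have hq : ∀ x ∈ quad (Formula.bb B), x ∈ base A := by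
    intro x hx
    simp only [base, Finset.mem_insert, Finset.mem_biUnion]
    right; right; exact ⟨Formula.bb B, hs, hx⟩
  refine ⟨?_, ?_, ?_, ?_⟩ <;>
    exact Finset.mem_biUnion.mpr ⟨_, hq _ (by simp [quad]), mem_sub_self _⟩

/-! ### Nodes: consistent complete subsets of Φ -/

section Nodes

variable (A₀ : Formula)

noncomputable def theoryL (X : Finset Formula) : List Formula :=
  X.toList ++ ((Phi A₀ \ X).toList.map Formula.neg)

structure Node where
  s : Finset Formula
  hsub : s ⊆ Phi A₀
  hcon : ConL (theoryL A₀ s)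

variable {A₀}

theorem sdt_node_mem {X : Node A₀} {C : Formula} (h : C ∈ X.s) : Sdt (theoryL A₀ X.s) C :=
  sdt_mem (by simp [theoryL]; left; exact h)

theorem sdt_node_neg {X : Node A₀} {C : Formula} (hPhi : C ∈ Phi A₀) (h : C ∉ X.s) :
    Sdt (theoryL A₀ X.s) C.neg :=
  sdt_mem (by simp [theoryL]; right; exact ⟨hPhi, h⟩)

theorem mem_of_sdt {X : Node A₀} {C : Formula} (hPhi : C ∈ Phi A₀)
    (h : Sdt (theoryL A₀ X.s) C) : C ∈ X.s := by
  by_contra hn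
  exact X.hcon (sdt_both h (sdt_node_neg hPhi hn))

theorem not_mem_of_sdt_neg {X : Node A₀} {C : Formula}
    (h : Sdt (theoryL A₀ X.s) C.neg) : C ∉ X.s := by
  intro hm
  exact X.hcon (sdt_both (sdt_node_mem hm) h)

theorem node_falsum {X : Node A₀} : Formula.falsum ∉ X.s :=
  fun h => X.hcon (sdt_node_mem h)

/-- extension deciding a list of formulas -/
theorem extendL (L : List Formula) {Γ : List Formula} (h : ConL Γ) :
    ∃ Γ', ConL Γ' ∧ (∀ D ∈ Γ, D ∈ Γ') ∧ ∀ C ∈ L, C ∈ Γ' ∨ C.neg ∈ Γ' := by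
  induction L with
  | nil => exact ⟨Γ, h, fun D hD => hD, by simp⟩
  | cons C L ih =>
    obtain ⟨Γ', hc, hsup, hdec⟩ := ih
    rcases con_cases hc C with h1 | h1
    · exact ⟨C :: Γ', h1, fun D hD => List.mem_cons_of_mem _ (hsup D hD),
        by
          intro D hD
          rcases List.mem_cons.mp hD with rfl | hD'
          · exact Or.inl List.mem_cons_self
          · rcases hdec D hD' with h' | h'
            · exact Or.inl (List.mem_cons_of_mem _ h')
            · exact Or.inr (List.mem_cons_of_mem _ h')⟩
    · exact ⟨C.neg :: Γ', h1, fun D hD => List.mem_cons_of_mem _ (hsup D hD),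
        by
          intro D hD
          rcases List.mem_cons.mp hD with rfl | hD'
          · exact Or.inr List.mem_cons_self
          · rcases hdec D hD' with h' | h'
            · exact Or.inl (List.mem_cons_of_mem _ h')
            · exact Or.inr (List.mem_cons_of_mem _ h')⟩

/-- any consistent list extends to a node -/
theorem node_of_con {Γ : List Formula} (h : ConL Γ) :
    ∃ Y : Node A₀, ConL (Γ ++ theoryL A₀ Y.s) := by
  obtain ⟨Γ', hc, hsup, hdec⟩ := extendL (Phi A₀).toList h
  set X : Finset Formula := (Phi A₀).filter (· ∈ Γ') with hX
  have key : ∀ C ∈ Γ ++ theoryL A₀ X, Sdt Γ' C := by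
    intro C hC
    simp only [List.mem_append, theoryL] at hC
    rcases hC with hC | hC | hC
    · exact sdt_mem (hsup C hC)
    · rw [Finset.mem_toList, hX, Finset.mem_filter] at hC
      exact sdt_mem hC.2
    · simp only [List.mem_map] at hC
      obtain ⟨D, hD, rfl⟩ := hC
      rw [Finset.mem_toList, Finset.mem_sdiff, hX, Finset.mem_filter] at hD
      have hDPhi : D ∈ Phi A₀ := hD.1
      have hnm : D ∉ Γ' := fun hmem => hD.2 ⟨hDPhi, hmem⟩
      rcases hdec D (Finset.mem_toList.mpr hDPhi) with h' | h'
      · exact absurd h' hnm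
      · exact sdt_mem h'
  have hbig : ConL (Γ ++ theoryL A₀ X) := by
    intro hic
    exact hc (GRbullet.imp_trans (sdt_conj key) hic)
  refine ⟨⟨X, Finset.filter_subset _ _, ?_⟩, hbig⟩
  exact con_sub (by intro x hx; simp [hx]) hbig

/-- membership facts from `ConL (Γ ++ theoryL Y)` -/
theorem mem_node_of_con_append {Γ : List Formula} {Y : Node A₀} {C : Formula}
    (h : ConL (Γ ++ theoryL A₀ Y.s)) (hC : C ∈ Γ) (hPhi : C ∈ Phi A₀) : C ∈ Y.s := by
  by_contra hn
  exact h (incon_of_mem (List.mem_append.mpr (Or.inl hC)) (by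
    simp only [List.mem_append, theoryL, List.mem_map]
    right; right; exact ⟨C, by rw [Finset.mem_toList, Finset.mem_sdiff]; exact ⟨hPhi, hn⟩, rfl⟩))

theorem not_mem_node_of_con_append {Γ : List Formula} {Y : Node A₀} {C : Formula}
    (h : ConL (Γ ++ theoryL A₀ Y.s)) (hC : C.neg ∈ Γ) (hPhi : C ∈ Phi A₀) : C ∉ Y.s := by
  intro hn
  exact h (incon_of_mem (by
    simp only [List.mem_append, theoryL]
    right; left; rw [Finset.mem_toList]; exact hn) (List.mem_append.mpr (Or.inl hC)))

theorem mem_node_of_con_append_negneg {Γ : List Formula} {Y : Node A₀} {C : Formula}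
    (h : ConL (Γ ++ theoryL A₀ Y.s)) (hC : (C.neg).neg ∈ Γ) (hPhi : C ∈ Phi A₀) :
    C ∈ Y.s := by
  by_contra hn
  refine h (incon_of_mem (C := C.neg) ?_ (List.mem_append.mpr (Or.inl hC)))
  simp only [List.mem_append, theoryL, List.mem_map]
  right; right; exact ⟨C, by rw [Finset.mem_toList, Finset.mem_sdiff]; exact ⟨hPhi, hn⟩, rfl⟩

end Nodes

/-! ### The canonical relation on nodes and existence lemmas -/

section Nlt

variable {A₀ : Formula}

/-- canonical GL relation between nodes -/
def nlt (X Y : Node A₀) : Prop :=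
  (∀ E : Formula, E.box ∈ X.s → E.box ∈ Y.s ∧ E ∈ Y.s) ∧
    ∃ E : Formula, E.box ∈ Y.s ∧ E.box ∉ X.s

theorem nlt_trans {X Y Z : Node A₀} (h1 : nlt X Y) (h2 : nlt Y Z) : nlt X Z := by
  obtain ⟨t1, E, hE1, hE2⟩ := h1
  refine ⟨fun F hF => (h2.1 F (t1 F hF).1), E, (h2.1 E hE1).1, hE2⟩

theorem nlt_irrefl (X : Node A₀) : ¬ nlt X X := by
  rintro ⟨_, E, hE1, hE2⟩; exact hE2 hE1

/-- a node is maximal iff it contains □⊥ -/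
def nmax (X : Node A₀) : Prop := Formula.falsum.box ∈ X.s

theorem not_nlt_of_nmax {X Y : Node A₀} (h : nmax X) : ¬ nlt X Y := by
  intro hlt
  exact node_falsum (hlt.1 Formula.falsum h).2

theorem nmax_not_mem_of_nlt {X Y : Node A₀} (h : nlt X Y) : ¬ nmax X :=
  fun hm => not_nlt_of_nmax hm h

/-- list of unboxings of the boxed formulas in a finset -/
noncomputable def unboxes (X : Finset Formula) : List Formula :=
  X.toList.filterMap fun C => match C with | .box E => some E | _ => none

theorem mem_unboxes {X : Finset Formula} {E : Formula} :
    E ∈ unboxes X ↔ E.box ∈ X := by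
  simp only [unboxes, List.mem_filterMap, Finset.mem_toList]
  constructor
  · rintro ⟨C, hC, hm⟩
    cases C <;> simp at hm
    · rwa [← hm]
  · intro h; exact ⟨E.box, h, rfl⟩

theorem mem_deltaL_box {E : Formula} {L : List Formula} (h : E ∈ L) :
    E.box ∈ deltaL L := by
  induction L with
  | nil => cases h
  | cons F L ih =>
    rcases List.mem_cons.mp h with rfl | h'
    · simp [deltaL]
    · simp only [deltaL, List.mem_cons]; right; right; exact ih h'

theorem mem_deltaL_self {E : Formula} {L : List Formula} (h : E ∈ L) :
    E ∈ deltaL L := by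
  induction L with
  | nil => cases h
  | cons F L ih =>
    rcases List.mem_cons.mp h with rfl | h'
    · simp [deltaL]
    · simp only [deltaL, List.mem_cons]; right; right; exact ih h'

/-- the Löb-style existence core at the level of nodes -/
theorem node_core (X : Node A₀) (χ : Formula)
    (hnb : Sdt (theoryL A₀ X.s) ((χ.box).neg)) :
    ConL (deltaL (unboxes X.s) ++ [χ.neg, χ.box]) := by
  intro hic
  have h := gl_core hic
  have h' : Sdt (theoryL A₀ X.s) (χ.box) := by
    refine sdt_weak ?_ h
    intro x hx
    simp only [boxesL, List.mem_map] at hx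
    obtain ⟨E, hE, rfl⟩ := hx
    have : E.box ∈ X.s := mem_unboxes.mp hE
    simp only [theoryL, List.mem_append, Finset.mem_toList]
    exact Or.inl this
  exact X.hcon (sdt_both h' hnb)

/-- main successor-existence lemma -/
theorem node_succ (X : Node A₀) (χ : Formula) (hbPhi : χ.box ∈ Phi A₀)
    (hnb : Sdt (theoryL A₀ X.s) ((χ.box).neg)) :
    ∃ Y : Node A₀, nlt X Y ∧ χ.box ∈ Y.s ∧ (χ ∈ Phi A₀ → χ ∉ Y.s) ∧
      ConL ((deltaL (unboxes X.s) ++ [χ.neg, χ.box]) ++ theoryL A₀ Y.s) := by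
  obtain ⟨Y, hY⟩ := node_of_con (node_core X χ hnb)
  have hboxχ : χ.box ∈ Y.s :=
    mem_node_of_con_append hY (by simp) hbPhi
  have hboxnX : χ.box ∉ X.s := by
    intro hm
    exact X.hcon (sdt_both (sdt_node_mem hm) hnb)
  have htrans : ∀ E : Formula, E.box ∈ X.s → E.box ∈ Y.s ∧ E ∈ Y.s := by
    intro E hE
    have hEb : E.box ∈ deltaL (unboxes X.s) := mem_deltaL_box (mem_unboxes.mpr hE)
    have hEm : E ∈ deltaL (unboxes X.s) := mem_deltaL_self (mem_unboxes.mpr hE)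
    have hEbPhi : E.box ∈ Phi A₀ := X.hsub hE
    exact ⟨mem_node_of_con_append hY (by simp [hEb]) hEbPhi,
      mem_node_of_con_append hY (by simp [hEm]) (unbox_mem_phi hEbPhi)⟩
  refine ⟨Y, ⟨htrans, χ, hboxχ, hboxnX⟩, hboxχ, ?_, hY⟩
  intro hχPhi
  exact not_mem_node_of_con_append hY (by simp) hχPhi

/-- existence for the □ case of the truth lemma -/
theorem exists_succ_not (X : Node A₀) (E : Formula) (hPhi : E.box ∈ Phi A₀)
    (hnm : E.box ∉ X.s) : ∃ Y : Node A₀, nlt X Y ∧ E ∉ Y.s := by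
  obtain ⟨Y, h1, _, h3, _⟩ := node_succ X E hPhi (sdt_node_neg hPhi hnm)
  exact ⟨Y, h1, h3 (unbox_mem_phi hPhi)⟩

/-- a non-maximal node has a successor -/
theorem exists_succ (X : Node A₀) (hnm : ¬ nmax X) : ∃ Y : Node A₀, nlt X Y := by
  obtain ⟨Y, h1, _⟩ := node_succ X Formula.falsum (boxbot_mem_phi A₀)
    (sdt_node_neg (boxbot_mem_phi A₀) hnm)
  exact ⟨Y, h1⟩

end Nlt

/-! ### Existence lemmas for the ■ truth conditions -/

section Ex

variable {A₀ : Formula}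

theorem neg_of_incon_singleton {C : Formula} (h : InconL [C]) : GRbullet C.neg := by
  have t : GRbullet (((conj [C]).imp Formula.falsum).imp C.neg) := .taut (by
    intro v; simp only [conj, Formula.imp, Formula.and, evalProp]
    cases evalProp v C <;> rfl)
  exact t.mp h

theorem of_incon_singleton_neg {C : Formula} (h : InconL [C.neg]) : GRbullet C := by
  have t : GRbullet (((conj [C.neg]).imp Formula.falsum).imp C) := .taut (by
    intro v; simp only [conj, Formula.imp, Formula.and, evalProp]
    cases evalProp v C <;> rfl)
  exact t.mp h

theorem taut_or_elim (P Q : Formula) :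
    GRbullet ((P.or Q).imp ((P.neg).imp ((Q.neg).imp Formula.falsum))) := .taut (by
  intro v; simp only [Formula.imp, evalProp]
  cases evalProp v P <;> cases evalProp v Q <;> rfl)

theorem taut_or_inl (P Q : Formula) : GRbullet (P.imp (P.or Q)) := .taut (by
  intro v; simp only [Formula.imp, evalProp]
  cases evalProp v P <;> cases evalProp v Q <;> rfl)

theorem taut_or_inr (P Q : Formula) : GRbullet (Q.imp (P.or Q)) := .taut (by
  intro v; simp only [Formula.imp, evalProp]
  cases evalProp v P <;> cases evalProp v Q <;> rfl)

theorem incon_both_node {X : Node A₀} {C : Formula} (h1 : C ∈ X.s) (h2 : C.neg ∈ X.s) :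
    False := by
  refine X.hcon (incon_of_mem (C := C) ?_ ?_) <;>
    simp only [theoryL, List.mem_append, Finset.mem_toList]
  · exact Or.inl h1
  · exact Or.inl h2

/-- `■B ∈ X` implies `□B ∈ X` -/
theorem box_mem_of_bb_mem {X : Node A₀} {B : Formula} (hPhi : Formula.bb B ∈ Phi A₀)
    (h : Formula.bb B ∈ X.s) : B.box ∈ X.s := by
  have h1 : Sdt (theoryL A₀ X.s) (B.box) := sdt_mp (sdt_of GRbullet.bbBox) (sdt_node_mem h)
  exact mem_of_sdt (quad_mem_phi hPhi).2.1 h1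

/-- at a non-maximal node, `■B ∉ X` implies `□B ∉ X` -/
theorem box_not_mem_of_bb_not_mem {X : Node A₀} {B : Formula} (hPhi : Formula.bb B ∈ Phi A₀)
    (hX : ¬ nmax X) (h : Formula.bb B ∉ X.s) : B.box ∉ X.s := by
  intro hb
  have h1 : Sdt (theoryL A₀ X.s) ((Formula.falsum.box).or (B.bb)) :=
    sdt_mp (sdt_of GRbullet.ros) (sdt_node_mem hb)
  have h2 : Sdt (theoryL A₀ X.s) ((Formula.falsum.box).neg) :=
    sdt_node_neg (boxbot_mem_phi A₀) hX
  have h3 : Sdt (theoryL A₀ X.s) ((B.bb).neg) := sdt_node_neg hPhi h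
  exact X.hcon (sdt_mp (sdt_mp2 (sdt_of (taut_or_elim _ _)) h1 h2) h3)

/-- E1: positive ■ witness above a predecessor -/
theorem succ_bb_pos {W X : Node A₀} {B : Formula} (hWX : nlt W X)
    (hPhi : Formula.bb B ∈ Phi A₀) (h : Formula.bb B ∈ X.s) :
    ∃ Y : Node A₀, nlt W Y ∧ B ∈ Y.s := by
  have hq := quad_mem_phi hPhi
  have h1 : ((B.bb).neg).box ∉ W.s := by
    intro hm
    have := hWX.1 _ hm
    exact incon_both_node h this.2
  have hnb : Sdt (theoryL A₀ W.s) ((((B.bb).neg).box).neg) := sdt_node_neg hq.2.2.1 h1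
  have hdia : Sdt (theoryL A₀ W.s) (((B.neg).box).neg) :=
    sdt_mp (sdt_of GRbullet.diaBb) hnb
  obtain ⟨Y, hlt, _, _, hY⟩ := node_succ W (B.neg) hq.1 hdia
  refine ⟨Y, hlt, ?_⟩
  exact mem_node_of_con_append_negneg hY (by simp)
    (mem_phi_of_sub hPhi (by simp [sub, mem_sub_self]))

/-- E2: negative ■ witness above a predecessor -/
theorem succ_bb_neg {W X : Node A₀} {B : Formula} (hWX : nlt W X)
    (hPhi : Formula.bb B ∈ Phi A₀) (h : Formula.bb B ∉ X.s) :
    ∃ Y : Node A₀, nlt W Y ∧ B ∉ Y.s := by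
  have hq := quad_mem_phi hPhi
  have h1 : (B.bb).box ∉ W.s := by
    intro hm
    exact h (hWX.1 _ hm).2
  have hnb : Sdt (theoryL A₀ W.s) (((B.bb).box).neg) := sdt_node_neg hq.2.2.2 h1
  have hnb2 : Sdt (theoryL A₀ W.s) ((B.box).neg) :=
    sdt_mp (sdt_of (GRbullet.contrapose GRbullet.boxBb)) hnb
  obtain ⟨Y, hlt, _, h3, _⟩ := node_succ W B hq.2.1 hnb2
  exact ⟨Y, hlt, h3 (mem_phi_of_sub hPhi (by simp [sub, mem_sub_self]))⟩

/-- L5: some node contains B (positive ■, no predecessor) -/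
theorem any_bb_pos {X : Node A₀} {B : Formula} (hPhi : Formula.bb B ∈ Phi A₀)
    (h : Formula.bb B ∈ X.s) : ∃ Y : Node A₀, B ∈ Y.s := by
  by_cases hc : ConL [B]
  · obtain ⟨Y, hY⟩ := node_of_con hc
    exact ⟨Y, mem_node_of_con_append hY (by simp)
      (mem_phi_of_sub hPhi (by simp [sub, mem_sub_self]))⟩
  · exfalso
    have hB : GRbullet (B.neg) := neg_of_incon_singleton (not_not.mp hc)
    have : GRbullet ((B.bb).neg) := GRbullet.rosser hB
    exact X.hcon (sdt_both (sdt_node_mem h) (sdt_of this))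

/-- L6: some node omits B (negative ■, no predecessor) -/
theorem any_bb_neg {X : Node A₀} {B : Formula} (hPhi : Formula.bb B ∈ Phi A₀)
    (h : Formula.bb B ∉ X.s) : ∃ Y : Node A₀, B ∉ Y.s := by
  by_cases hc : ConL [B.neg]
  · obtain ⟨Y, hY⟩ := node_of_con hc
    exact ⟨Y, not_mem_node_of_con_append hY (by simp)
      (mem_phi_of_sub hPhi (by simp [sub, mem_sub_self]))⟩
  · exfalso
    have hB : GRbullet B := of_incon_singleton_neg (not_not.mp hc)
    have : GRbullet (B.bb) := GRbullet.bbnec hB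
    exact X.hcon (sdt_both (sdt_of this) (sdt_node_neg hPhi h))

/-- a node omitting `A₀` -/
theorem refuting_node (h : ¬ GRbullet A₀) : ∃ X : Node A₀, A₀ ∉ X.s := by
  by_cases hc : ConL [A₀.neg]
  · obtain ⟨Y, hY⟩ := node_of_con hc
    exact ⟨Y, not_mem_node_of_con_append hY (by simp) (self_mem_phi A₀)⟩
  · exact absurd (of_incon_singleton_neg (not_not.mp hc)) h

/-- membership conditions for propositional connectives -/
theorem node_neg_mem {X : Node A₀} {D : Formula} (hPhi : D.neg ∈ Phi A₀) :
    D.neg ∈ X.s ↔ D ∉ X.s := by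
  constructor
  · intro h1 h2; exact incon_both_node h2 h1
  · intro h
    exact mem_of_sdt hPhi (sdt_node_neg (unneg_mem_phi hPhi) h)

theorem node_or_mem {X : Node A₀} {D E : Formula} (hPhi : Formula.or D E ∈ Phi A₀) :
    Formula.or D E ∈ X.s ↔ (D ∈ X.s ∨ E ∈ X.s) := by
  constructor
  · intro h
    by_contra hn
    push_neg at hn
    have h1 := sdt_node_mem (A₀ := A₀) (X := X) h
    have h2 := sdt_node_neg (unor_mem_phi hPhi).1 hn.1
    have h3 := sdt_node_neg (unor_mem_phi hPhi).2 hn.2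
    exact X.hcon (sdt_mp (sdt_mp2 (sdt_of (taut_or_elim D E)) h1 h2) h3)
  · intro h
    rcases h with h | h
    · exact mem_of_sdt hPhi (sdt_mp (sdt_of (taut_or_inl D E)) (sdt_node_mem h))
    · exact mem_of_sdt hPhi (sdt_mp (sdt_of (taut_or_inr D E)) (sdt_node_mem h))

end Ex

/-! ### The canonical frame: tree unraveling of the node model -/

section CFrame

variable {A₀ : Formula}

inductive CPath (A₀ : Formula) : Node A₀ → Type where
  | single (X : Node A₀) : CPath A₀ X
  | cons {Y : Node A₀} (p : CPath A₀ Y) (X : Node A₀) (h : nlt Y X) : CPath A₀ X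

abbrev CPathW (A₀ : Formula) := Σ X : Node A₀, CPath A₀ X

def ancP : {X : Node A₀} → CPath A₀ X → List (CPathW A₀)
  | _, .single _ => []
  | _, .cons p _ _ => ⟨_, p⟩ :: ancP p

def anc (w : CPathW A₀) : List (CPathW A₀) := ancP w.2

theorem anc_lab {X : Node A₀} (p : CPath A₀ X) {w : CPathW A₀} (h : w ∈ ancP p) :
    nlt w.1 X := by
  induction p with
  | single X => cases h
  | cons p X hn ih =>
    rcases List.mem_cons.mp h with rfl | h'
    · exact hn
    · exact nlt_trans (ih h') hn

theorem anc_trans {w w' w'' : CPathW A₀} (h1 : w ∈ anc w') (h2 : w' ∈ anc w'') :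
    w ∈ anc w'' := by
  obtain ⟨X, p⟩ := w''
  induction p with
  | single X => cases h2
  | cons p X hn ih =>
    rcases List.mem_cons.mp h2 with rfl | h'
    · exact List.mem_cons_of_mem _ h1
    · exact List.mem_cons_of_mem _ (ih h')

def labels : {X : Node A₀} → CPath A₀ X → List (Node A₀)
  | _, .single X => [X]
  | _, .cons p X _ => X :: labels p

theorem labels_ne_nil {X : Node A₀} (p : CPath A₀ X) : labels p ≠ [] := by
  cases p <;> simp [labels]

theorem mem_labels {X : Node A₀} (p : CPath A₀ X) {b : Node A₀} (h : b ∈ labels p) :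
    b = X ∨ nlt b X := by
  induction p with
  | single X => simp [labels] at h; exact Or.inl h
  | cons p X hn ih =>
    rcases List.mem_cons.mp h with rfl | h'
    · exact Or.inl rfl
    · rcases ih h' with rfl | h''
      · exact Or.inr hn
      · exact Or.inr (nlt_trans h'' hn)

theorem labels_pairwise {X : Node A₀} (p : CPath A₀ X) :
    (labels p).Pairwise (fun a b => nlt b a) := by
  induction p with
  | single X => simp [labels]
  | cons p X hn ih =>
    refine List.pairwise_cons.mpr ⟨?_, ih⟩
    intro b hb
    rcases mem_labels p hb with rfl | h''
    · exact hn
    · exact nlt_trans h'' hn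

theorem labels_nodup {X : Node A₀} (p : CPath A₀ X) : (labels p).Nodup :=
  (labels_pairwise p).imp (fun h => by rintro rfl; exact nlt_irrefl _ h)

/-- Node is a finite type -/
instance : Finite (Node A₀) := by
  refine Finite.of_injective
    (fun X : Node A₀ => (⟨X.s, Finset.mem_powerset.mpr X.hsub⟩ : (Phi A₀).powerset)) ?_
  rintro ⟨s, h1, h2⟩ ⟨t, h3, h4⟩ h
  simp only [Subtype.mk.injEq] at h
  cases h; rfl

theorem labels_length_le {X : Node A₀} (p : CPath A₀ X) :
    (labels p).length ≤ Nat.card (Node A₀) := by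
  letI : Fintype (Node A₀) := Fintype.ofFinite _
  rw [Nat.card_eq_fintype_card]
  exact (labels_nodup p).length_le_card

def lenP {X : Node A₀} (p : CPath A₀ X) : ℕ := (labels p).length

theorem lenP_pos {X : Node A₀} (p : CPath A₀ X) : 1 ≤ lenP p := by
  cases p <;> simp [lenP, labels]

theorem mem_anc_len {X : Node A₀} (p : CPath A₀ X) {w : CPathW A₀} (h : w ∈ ancP p) :
    lenP w.2 < lenP p := by
  induction p with
  | single X => cases h
  | cons p X hn ih =>
    rcases List.mem_cons.mp h with rfl | h'
    · simp [lenP, labels]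
    · exact (ih h').trans (by simp [lenP, labels])

theorem labels_inj : ∀ {X Y : Node A₀} (p : CPath A₀ X) (q : CPath A₀ Y),
    labels p = labels q → (⟨X, p⟩ : CPathW A₀) = ⟨Y, q⟩ := by
  intro X Y p q h
  induction p generalizing Y q with
  | single X =>
    cases q with
    | single Y => simp [labels] at h; subst h; rfl
    | cons q' Y hq =>
      simp only [labels] at h
      obtain ⟨rfl, h2⟩ := List.cons.injEq .. ▸ h
      exact absurd h2.symm (labels_ne_nil q')
  | cons p' X hp ih =>
    cases q with
    | single Y =>
      simp only [labels] at h
      obtain ⟨rfl, h2⟩ := List.cons.injEq .. ▸ h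
      exact absurd h2 (labels_ne_nil p')
    | cons q' Y hq =>
      simp only [labels, List.cons.injEq] at h
      obtain ⟨rfl, h2⟩ := h
      have := ih q' h2
      obtain ⟨rfl, h4⟩ := Sigma.mk.inj_iff.mp this
      cases h4
      rfl

instance myOptFin (α : Type) [Finite α] : Finite (Option α) :=
  Finite.of_equiv _ (Equiv.optionEquivSumPUnit.{0,0} α).symm

instance : Finite (CPathW A₀) := by
  refine Finite.of_injective
    (fun w : CPathW A₀ => (fun i => (labels w.2)[i.val]? :
      Fin (Nat.card (Node A₀) + 1) → Option (Node A₀))) ?_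
  rintro ⟨X, p⟩ ⟨Y, q⟩ h
  apply labels_inj
  apply List.ext_getElem?
  intro n
  by_cases hn : n < Nat.card (Node A₀) + 1
  · exact congrFun h ⟨n, hn⟩
  · rw [List.getElem?_eq_none_iff.mpr, List.getElem?_eq_none_iff.mpr]
    · exact le_trans (labels_length_le q) (by omega)
    · exact le_trans (labels_length_le p) (by omega)

end CFrame

/-! ### The canonical GR°-frame -/

section WorldSec

variable {A₀ : Formula}

def World (A₀ : Formula) : Type := Option (CPathW A₀)

instance : Finite (World A₀) := by
  unfold World; infer_instance

def clt : World A₀ → World A₀ → Prop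
  | none, some _ => True
  | some σ, some τ => σ ∈ anc τ
  | _, none => False

def guardP (B : Formula) (X Y : Node A₀) : Prop :=
  (Formula.bb B ∈ Phi A₀ ∧ Formula.bb B ∈ X.s) → B ∈ Y.s

def cprec (B : Formula) : World A₀ → World A₀ → Prop
  | none, none => False
  | none, some _ => True
  | some _, none => False
  | some σ, some τ =>
      (¬ nmax σ.1 ∧ σ ∈ anc τ) ∨
      (nmax σ.1 ∧ (∀ ρ ∈ anc σ, ρ ∈ anc τ) ∧ guardP B σ.1 τ.1)

theorem clt_trans {x y z : World A₀} (h1 : clt x y) (h2 : clt y z) : clt x z := by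
  match x, y, z with
  | _, _, none => exact absurd h2 (by cases y <;> simp [clt])
  | _, none, _ => exact absurd h1 (by cases x <;> simp [clt])
  | none, some σ, some τ => trivial
  | some ρ, some σ, some τ => exact anc_trans h1 h2

noncomputable def rankW : World A₀ → ℕ
  | none => Nat.card (Node A₀) + 2
  | some σ => Nat.card (Node A₀) + 1 - lenP σ.2

theorem clt_rank {x y : World A₀} (h : clt x y) : rankW y < rankW x := by
  match x, y with
  | _, none => exact absurd h (by cases x <;> simp [clt])
  | none, some σ =>
    have h1 := lenP_pos σ.2
    simp only [rankW]
    omega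
  | some σ, some τ =>
    have h1 : lenP σ.2 < lenP τ.2 := mem_anc_len τ.2 h
    have h2 : lenP τ.2 ≤ Nat.card (Node A₀) := labels_length_le τ.2
    have h3 := lenP_pos σ.2
    simp only [rankW]
    omega

theorem clt_wf : WellFounded (fun x y : World A₀ => clt y x) :=
  Subrelation.wf (fun {x y} h => clt_rank h) (InvImage.wf rankW Nat.lt_wfRel.wf)

theorem clt_to_cprec {B : Formula} {x y : World A₀} (h : clt x y) : cprec B x y := by
  match x, y with
  | _, none => exact absurd h (by cases x <;> simp [clt])
  | none, some τ => trivial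
  | some σ, some τ =>
    left
    exact ⟨fun hm => not_nlt_of_nmax hm (anc_lab τ.2 h), h⟩

theorem clt_cprec_clt {B : Formula} {x y z : World A₀} (h1 : clt x y) (h2 : cprec B y z) :
    clt x z := by
  match x, y, z with
  | _, none, _ => exact absurd h1 (by cases x <;> simp [clt])
  | _, some σ, none => exact absurd h2 (by simp [cprec])
  | none, some σ, some τ => trivial
  | some ρ, some σ, some τ =>
    rcases h2 with ⟨_, h2⟩ | ⟨_, h2, _⟩
    · exact anc_trans h1 h2
    · exact h2 ρ h1

theorem cprec_clt_clt {B : Formula} {x y z : World A₀} (h1 : cprec B x y) (h2 : clt x z) :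
    clt x y := by
  match x, y, z with
  | none, none, _ => exact absurd h1 (by simp [cprec])
  | none, some _, _ => trivial
  | some _, _, none => exact absurd h2 (by simp [clt])
  | some σ, none, some _ => exact absurd h1 (by simp [cprec])
  | some σ, some τ, some ρ =>
    rcases h1 with ⟨_, h1⟩ | ⟨hm, _, _⟩
    · exact h1
    · exact ((not_nlt_of_nmax hm) (anc_lab ρ.2 h2)).elim

/-- key seriality lemma at a path world -/
theorem cprec_succ (B : Formula) (σ : CPathW A₀) :
    ∃ τ : CPathW A₀, cprec B (some σ) (some τ) ∧ ∀ ρ ∈ anc σ, ρ ∈ anc τ := by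
  by_cases hm : nmax σ.1
  · by_cases hg : Formula.bb B ∈ Phi A₀ ∧ Formula.bb B ∈ σ.1.s
    · by_cases hB : B ∈ σ.1.s
      · exact ⟨σ, Or.inr ⟨hm, fun ρ h => h, fun _ => hB⟩, fun ρ h => h⟩
      · -- need a fresh witness containing B
        obtain ⟨X, p⟩ := σ
        cases p with
        | single X =>
          obtain ⟨Y, hY⟩ := any_bb_pos hg.1 hg.2
          refine ⟨⟨Y, .single Y⟩, Or.inr ⟨hm, ?_, fun _ => hY⟩, ?_⟩ <;>
            · intro ρ h; cases h
        | cons p X hp =>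
          obtain ⟨Y, hlt, hY⟩ := succ_bb_pos hp hg.1 hg.2
          refine ⟨⟨Y, .cons p Y hlt⟩, Or.inr ⟨hm, ?_, fun _ => hY⟩, ?_⟩ <;>
            · intro ρ h; exact h
    · exact ⟨σ, Or.inr ⟨hm, fun ρ h => h, fun h => absurd h hg⟩, fun ρ h => h⟩
  · obtain ⟨Y, hlt⟩ := exists_succ σ.1 hm
    refine ⟨⟨Y, .cons σ.2 Y hlt⟩, Or.inl ⟨hm, ?_⟩, ?_⟩
    · exact List.mem_cons_self
    · intro ρ h; exact List.mem_cons_of_mem _ h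

theorem clt_succ {B : Formula} {x y : World A₀} (h : clt x y) :
    ∃ z : World A₀, cprec B y z ∧ clt x z := by
  match x, y with
  | _, none => exact absurd h (by cases x <;> simp [clt])
  | none, some σ =>
    obtain ⟨τ, h1, _⟩ := cprec_succ B σ
    exact ⟨some τ, h1, trivial⟩
  | some ρ, some σ =>
    obtain ⟨τ, h1, h2⟩ := cprec_succ B σ
    exact ⟨some τ, h1, h2 ρ h⟩

/-- the canonical frame -/
noncomputable def cframe (A₀ : Formula) : GRFrame where
  W := World A₀
  nonempty := ⟨none⟩
  lt := clt
  lt_trans := clt_trans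
  cwf := clt_wf
  prec := cprec
  lt_to_prec := clt_to_cprec
  lt_prec_lt := clt_cprec_clt
  prec_lt_lt := cprec_clt_clt
  lt_succ := clt_succ

end WorldSec

/-! ### Satisfaction from a valuation, and the truth lemma -/

def evalW (F : GRFrame) (v : F.W → ℕ → Prop) : Formula → F.W → Prop
  | .var n => fun w => v w n
  | .falsum => fun _ => False
  | .neg A => fun w => ¬ evalW F v A w
  | .or A B => fun w => evalW F v A w ∨ evalW F v B w
  | .box A => fun w => ∀ x, F.lt w x → evalW F v A x
  | .bb A => fun w => ∀ x, F.prec A w x → evalW F v A x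

def mkSat (F : GRFrame) (v : F.W → ℕ → Prop) : GRSat F where
  frc := fun w C => evalW F v C w
  frc_falsum := fun w h => h
  frc_neg := fun w A => Iff.rfl
  frc_or := fun w A B => Iff.rfl
  frc_box := fun w B => Iff.rfl
  frc_bb := fun w B => Iff.rfl

section Truth

variable {A₀ : Formula}

noncomputable def cval : World A₀ → ℕ → Prop
  | none, _ => False
  | some σ, n => Formula.var n ∈ σ.1.s

theorem truth_lemma (C : Formula) (hC : C ∈ Phi A₀) (σ : CPathW A₀) :
    evalW (cframe A₀) cval C (some σ) ↔ C ∈ σ.1.s := by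
  induction C generalizing σ with
  | var n => exact Iff.rfl
  | falsum => exact ⟨fun h => h.elim, fun h => node_falsum h⟩
  | neg D ih =>
    have hD : D ∈ Phi A₀ := unneg_mem_phi hC
    simp only [evalW]
    rw [ih hD σ, node_neg_mem hC]
  | or D E ihD ihE =>
    have hD := (unor_mem_phi hC).1
    have hE := (unor_mem_phi hC).2
    simp only [evalW]
    rw [ihD hD σ, ihE hE σ, node_or_mem hC]
  | box D ih =>
    have hD : D ∈ Phi A₀ := unbox_mem_phi hC
    simp only [evalW]
    constructor
    · intro h
      by_contra hn
      obtain ⟨Y, hlt, hnY⟩ := exists_succ_not σ.1 D hC hn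
      have h1 : clt (some σ) (some ⟨Y, .cons σ.2 Y hlt⟩) := List.mem_cons_self
      have := (ih hD _).mp (h _ h1)
      exact hnY this
    · intro h x hx
      match x, hx with
      | some τ, hx =>
        have hnlt : nlt σ.1 τ.1 := anc_lab τ.2 hx
        exact (ih hD τ).mpr (hnlt.1 D h).2
  | bb D ih =>
    have hD : D ∈ Phi A₀ := mem_phi_of_sub hC (by simp [sub, mem_sub_self])
    simp only [evalW]
    constructor
    · intro h
      by_contra hn
      by_cases hm : nmax σ.1
      · -- maximal: find a prec-successor omitting D
        by_cases hDσ : D ∈ σ.1.s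
        · obtain ⟨X, p⟩ := σ
          cases p with
          | single X =>
            obtain ⟨Y, hnY⟩ := any_bb_neg hC hn
            have hp : cprec D (some ⟨X, .single X⟩) (some ⟨Y, .single Y⟩) :=
              Or.inr ⟨hm, fun ρ hρ => (by cases hρ), fun hg => absurd hg.2 hn⟩
            exact hnY ((ih hD _).mp (h _ hp))
          | cons p X hplt =>
            obtain ⟨Y, hlt, hnY⟩ := succ_bb_neg hplt hC hn
            have hp : cprec D (some ⟨X, .cons p X hplt⟩) (some ⟨Y, .cons p Y hlt⟩) :=
              Or.inr ⟨hm, fun ρ hρ => hρ, fun hg => absurd hg.2 hn⟩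
            exact hnY ((ih hD _).mp (h _ hp))
        · have hp : cprec D (some σ) (some σ) :=
            Or.inr ⟨hm, fun ρ hρ => hρ, fun hg => absurd hg.2 hn⟩
          exact hDσ ((ih hD _).mp (h _ hp))
      · -- non-maximal: □D ∉ σ, get a ⊏-successor omitting D
        have hbox : D.box ∉ σ.1.s := box_not_mem_of_bb_not_mem hC hm hn
        obtain ⟨Y, hlt, hnY⟩ := exists_succ_not σ.1 D (quad_mem_phi hC).2.1 hbox
        have hp : cprec D (some σ) (some ⟨Y, .cons σ.2 Y hlt⟩) :=
          Or.inl ⟨hm, List.mem_cons_self⟩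
        exact hnY ((ih hD _).mp (h _ hp))
    · intro h x hx
      match x, hx with
      | some τ, hx =>
        rcases hx with ⟨_, hx⟩ | ⟨_, _, hg⟩
        · -- ⊏-successor: use ■D → □D
          have hbox : D.box ∈ σ.1.s := box_mem_of_bb_mem hC h
          have hnlt : nlt σ.1 τ.1 := anc_lab τ.2 hx
          exact (ih hD τ).mpr (hnlt.1 D hbox).2
        · exact (ih hD τ).mpr (hg ⟨hC, h⟩)

/-- Completeness: a non-theorem fails on a finite serial non-trivial frame -/
theorem completeness (h : ¬ GRbullet A₀) :
    ∃ F : GRFrame, F.Serial ∧ F.NonTrivial ∧ Finite F.W ∧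
      ∃ (S : GRSat F) (w : F.W), ¬ S.frc w A₀ := by
  obtain ⟨X₀, hX₀⟩ := refuting_node h
  refine ⟨cframe A₀, ?_, ?_, ?_, mkSat _ cval, some ⟨X₀, .single X₀⟩, ?_⟩
  · -- serial
    intro B x
    match x with
    | none => exact ⟨some ⟨X₀, .single X₀⟩, trivial⟩
    | some σ =>
      obtain ⟨τ, h1, _⟩ := cprec_succ B σ
      exact ⟨some τ, h1⟩
  · -- non-trivial
    refine ⟨none, some ⟨X₀, .single X₀⟩, ?_, by intro h; cases h⟩
    intro x hx
    match x with
    | none => exact absurd rfl hx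
    | some τ => exact trivial
  · show Finite (World A₀); infer_instance
  · intro hfrc
    exact hX₀ ((truth_lemma A₀ (self_mem_phi A₀) _).mp hfrc)

end Truth

/-! ### Soundness -/

section Soundness

variable {F : GRFrame} {S : GRSat F}

theorem frc_imp (w : F.W) (A B : Formula) :
    S.frc w (A.imp B) ↔ (S.frc w A → S.frc w B) := by
  rw [Formula.imp, S.frc_or, S.frc_neg]
  tauto

theorem frc_taut {B : Formula} (h : Taut B) (w : F.W) : S.frc w B := by
  classical
  let v : Formula → Bool := fun C => decide (S.frc w C)
  have key : ∀ C, evalProp v C = true ↔ S.frc w C := by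
    intro C
    induction C with
    | var n => simp [evalProp, v]
    | falsum => simpa [evalProp] using (S.frc_falsum w)
    | neg A ih => rw [evalProp, Bool.not_eq_true', ← Bool.not_eq_true, ih, S.frc_neg]
    | or A B ihA ihB => rw [evalProp, Bool.or_eq_true, ihA, ihB, S.frc_or]
    | box A ih => simp [evalProp, v]
    | bb A ih => simp [evalProp, v]
  exact (key B).mp (h v)

theorem sound {A : Formula} (h : GRbullet A) :
    ∀ F : GRFrame, (F.Serial ∨ F.NonTrivial) → ValidOn F A := by
  induction h with
  | @taut A ht => intro F _ S w; exact frc_taut ht w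
  | @k A B =>
    intro F _ S w
    rw [frc_imp, frc_imp]
    intro h1 h2
    rw [S.frc_box] at h1 h2 ⊢
    intro x hx
    exact (frc_imp x A B).mp (h1 x hx) (h2 x hx)
  | @loeb A =>
    intro F _ S w
    rw [frc_imp]
    intro h1
    rw [S.frc_box] at h1 ⊢
    intro x hx
    induction x using F.cwf.induction with
    | _ x ih =>
    -- ih : ∀ y, F.lt x y → (F.lt w y → S.frc y A)  -- check orientation
      have hxA : S.frc x ((A.box).imp A) := h1 x hx
      refine (frc_imp x (A.box) A).mp hxA ?_
      rw [S.frc_box]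
      intro y hy
      exact ih y hy (F.lt_trans hx hy)
  | @bbBox A =>
    intro F _ S w
    rw [frc_imp, S.frc_bb, S.frc_box]
    intro h1 x hx
    exact h1 x (F.lt_to_prec hx)
  | @boxBb A =>
    intro F _ S w
    rw [frc_imp, S.frc_box, S.frc_box]
    intro h1 x hx
    rw [S.frc_bb]
    intro y hy
    exact h1 y (F.lt_prec_lt hx hy)
  | @ros A =>
    intro F _ S w
    rw [frc_imp, S.frc_or]
    intro h1
    by_cases hbot : S.frc w (Formula.falsum.box)
    · exact Or.inl hbot
    · right
      rw [S.frc_box] at hbot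
      push_neg at hbot
      obtain ⟨z, hz, _⟩ := hbot
      rw [S.frc_bb]
      intro y hy
      rw [S.frc_box] at h1
      exact h1 y (F.prec_lt_lt hy hz)
  | @diaBb A =>
    intro F _ S w
    rw [frc_imp, Formula.dia, Formula.dia, S.frc_neg, S.frc_neg]
    intro h1
    rw [S.frc_box] at h1
    push_neg at h1
    obtain ⟨x, hx, hbb⟩ := h1
    rw [S.frc_neg, not_not, S.frc_bb] at hbb
    obtain ⟨z, hz1, hz2⟩ := F.lt_succ (B := A) hx
    rw [S.frc_box]
    push_neg
    refine ⟨z, hz2, ?_⟩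
    rw [S.frc_neg, not_not]
    exact hbb z hz1
  | @mp A B h1 h2 ih1 ih2 =>
    intro F hF S w
    exact (frc_imp w A B).mp (ih1 F hF S w) (ih2 F hF S w)
  | @nec A h ih =>
    intro F hF S w
    rw [S.frc_box]
    intro x _
    exact ih F hF S x
  | @bbnec A h ih =>
    intro F hF S w
    rw [S.frc_bb]
    intro x _
    exact ih F hF S x
  | @rosser A h ih =>
    intro F hF S w
    rw [S.frc_neg, S.frc_bb]
    intro hall
    have hex : ∃ y, F.prec A w y := by
      rcases hF with hser | ⟨r, w₀, hroot, hne⟩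
      · exact hser A w
      · by_cases hw : w = r
        · subst hw
          exact ⟨w₀, F.lt_to_prec (hroot w₀ (Ne.symm hne))⟩
        · obtain ⟨z, hz, _⟩ := F.lt_succ (B := A) (hroot w hw)
          exact ⟨z, hz⟩
    obtain ⟨y, hy⟩ := hex
    have h1 : S.frc y (A.neg) := ih F hF S y
    rw [S.frc_neg] at h1
    exact h1 (hall y hy)

end Soundness

/-! ### Root extension for serial frames -/

section RootExt

def addRootLt (F : GRFrame) : Option F.W → Option F.W → Prop
  | none, some _ => True
  | some x, some y => F.lt x y
  | _, none => False

def addRootPrec (F : GRFrame) (B : Formula) : Option F.W → Option F.W → Prop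
  | none, some _ => True
  | some x, some y => F.prec B x y
  | _, none => False

def addRoot (F : GRFrame) (hser : F.Serial) : GRFrame where
  W := Option F.W
  nonempty := ⟨none⟩
  lt := addRootLt F
  lt_trans := by
    intro x y z h1 h2
    match x, y, z with
    | _, _, none => exact absurd h2 (by cases y <;> simp [addRootLt])
    | _, none, _ => exact absurd h1 (by cases x <;> simp [addRootLt])
    | none, some _, some _ => trivial
    | some x, some y, some z => exact F.lt_trans h1 h2
  cwf := by
    constructor
    intro a
    have hacc : ∀ x : F.W, Acc (fun a b : Option F.W => addRootLt F b a) (some x) := by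
      intro x
      induction x using F.cwf.induction with
      | _ x ih =>
        constructor
        intro y hy
        match y, hy with
        | some y, hy => exact ih y hy
    match a with
    | some x => exact hacc x
    | none =>
      constructor
      intro y hy
      match y, hy with
      | some y, _ => exact hacc y
  prec := addRootPrec F
  lt_to_prec := by
    intro B x y h
    match x, y, h with
    | none, some _, _ => trivial
    | some x, some y, h => exact F.lt_to_prec h
  lt_prec_lt := by
    intro B x y z h1 h2
    match x, y, z with
    | _, none, _ => exact absurd h1 (by cases x <;> simp [addRootLt])
    | _, some y, none => exact absurd h2 (by simp [addRootPrec])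
    | none, some y, some z => trivial
    | some x, some y, some z => exact F.lt_prec_lt h1 h2
  prec_lt_lt := by
    intro B x y z h1 h2
    match x, y, z with
    | _, _, none => exact absurd h2 (by cases x <;> simp [addRootLt])
    | _, none, _ => exact absurd h1 (by cases x <;> simp [addRootPrec])
    | none, some y, some z => trivial
    | some x, some y, some z => exact F.prec_lt_lt h1 h2
  lt_succ := by
    intro B x y h
    match x, y with
    | _, none => exact absurd h (by cases x <;> simp [addRootLt])
    | none, some y =>
      obtain ⟨z, hz⟩ := hser B y
      exact ⟨some z, hz, trivial⟩
    | some x, some y =>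
      obtain ⟨z, hz1, hz2⟩ := F.lt_succ (B := B) h
      exact ⟨some z, hz1, hz2⟩

theorem addRoot_serial (F : GRFrame) (hser : F.Serial) : (addRoot F hser).Serial := by
  intro B x
  match x with
  | none =>
    obtain ⟨w⟩ := F.nonempty
    exact ⟨some w, trivial⟩
  | some x =>
    obtain ⟨z, hz⟩ := hser B x
    exact ⟨some z, hz⟩

theorem addRoot_transfer (F : GRFrame) (hser : F.Serial) (S : GRSat F) :
    ∀ (C : Formula) (w : F.W),
      evalW (addRoot F hser) (fun x n => match x with
        | some w => S.frc w (Formula.var n) | none => False) C (some w) ↔ S.frc w C := by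
  intro C
  induction C with
  | var n => intro w; simp [evalW]
  | falsum => intro w; simp [evalW]; exact fun h => (S.frc_falsum w h).elim
  | neg A ih => intro w; rw [evalW]; simp only []; rw [ih w, S.frc_neg]
  | or A B ihA ihB => intro w; rw [evalW]; simp only []; rw [ihA w, ihB w, S.frc_or]
  | box A ih =>
    intro w
    rw [evalW]; simp only []
    rw [S.frc_box]
    constructor
    · intro h x hx
      exact (ih x).mp (h (some x) hx)
    · intro h x hx
      match x, hx with
      | some x, hx => exact (ih x).mpr (h x hx)
  | bb A ih =>
    intro w
    rw [evalW]; simp only []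
    rw [S.frc_bb]
    constructor
    · intro h x hx
      exact (ih x).mp (h (some x) hx)
    · intro h x hx
      match x, hx with
      | some x, hx => exact (ih x).mpr (h x hx)

theorem rootext {A : Formula} (h : ∀ F : GRFrame, F.Serial → ValidOn F (A.box)) :
    ∀ F : GRFrame, F.Serial → ValidOn F A := by
  intro F hser S w
  set v : (addRoot F hser).W → ℕ → Prop := fun x n => match x with
    | some w => S.frc w (Formula.var n) | none => False with hv
  have h1 := h (addRoot F hser) (addRoot_serial F hser) (mkSat _ v) none
  have h2 : ∀ x, (addRoot F hser).lt none x → evalW (addRoot F hser) v A x :=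
    ((mkSat (addRoot F hser) v).frc_box none A).mp h1
  exact (addRoot_transfer F hser S A w).mp (h2 (some w) trivial)

end RootExt

/-! ### Final assembly -/

theorem grb_to_gr {A : Formula} (h : GRbullet A) : GR A := by
  induction h with
  | taut ht => exact .taut ht
  | k => exact .k
  | loeb => exact .loeb
  | bbBox => exact .bbBox
  | boxBb => exact .boxBb
  | ros => exact .ros
  | diaBb => exact .diaBb
  | mp h1 h2 ih1 ih2 => exact ih1.mp ih2
  | nec h ih => exact ih.nec
  | bbnec h ih => exact GR.boxElim (GR.mp GR.boxBb ih.nec)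
  | @rosser A h ih =>
    have h1 : GR ((A.neg).box) := ih.nec
    have t : GR ((((A.bb).dia).imp (A.dia)).imp
        (((A.neg).box).imp ((((A.bb).neg).box)))) :=
      .taut (by
        intro v; simp only [Formula.imp, Formula.dia, evalProp]
        cases v ((A.neg).box) <;> cases v (((A.bb).neg).box) <;> rfl)
    exact GR.boxElim ((t.mp GR.diaBb).mp h1)

theorem gr_to_grb {A : Formula} (h : GR A) : GRbullet A := by
  induction h with
  | taut ht => exact .taut ht
  | k => exact .k
  | loeb => exact .loeb
  | bbBox => exact .bbBox
  | boxBb => exact .boxBb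
  | ros => exact .ros
  | diaBb => exact .diaBb
  | mp h1 h2 ih1 ih2 => exact ih1.mp ih2
  | nec h ih => exact ih.nec
  | boxElim h ih =>
    by_contra hn
    obtain ⟨F, hser, _, _, S, w, hw⟩ := completeness hn
    exact hw (rootext (fun F' hs' => sound ih F' (Or.inl hs')) F hser S w)

/-- `GR• ⊢ A` iff `GR ⊢ A` iff `A` is valid on all non-trivial `GR°`-frames
iff `A` is valid on all `■`-serial `GR°`-frames; moreover `GR` has the finite
frame property with respect to non-trivial `GR°`-frames. -/
theorem GR_ffp (A : Formula) :
    (GRbullet A ↔ GR A) ∧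
    (GR A ↔ ∀ F : GRFrame, F.NonTrivial → ValidOn F A) ∧
    (GR A ↔ ∀ F : GRFrame, F.Serial → ValidOn F A) ∧
    (GR A ↔ ∀ F : GRFrame, F.NonTrivial → Finite F.W → ValidOn F A) := by
  refine ⟨⟨grb_to_gr, gr_to_grb⟩, ⟨?_, ?_⟩, ⟨?_, ?_⟩, ⟨?_, ?_⟩⟩
  · intro h F hnt
    exact sound (gr_to_grb h) F (Or.inr hnt)
  · intro h
    by_contra hn
    obtain ⟨F, _, hnt, _, S, w, hw⟩ := completeness (fun hb => hn (grb_to_gr hb))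
    exact hw (h F hnt S w)
  · intro h F hser
    exact sound (gr_to_grb h) F (Or.inl hser)
  · intro h
    by_contra hn
    obtain ⟨F, hser, _, _, S, w, hw⟩ := completeness (fun hb => hn (grb_to_gr hb))
    exact hw (h F hser S w)
  · intro h F hnt _
    exact sound (gr_to_grb h) F (Or.inr hnt)
  · intro h
    by_contra hn
    obtain ⟨F, _, hnt, hfin, S, w, hw⟩ := completeness (fun hb => hn (grb_to_gr hb))
    exact hw (h F hnt hfin S w)
end

section
/- For any L₂-formula A: GR⁻ ⊢ A^⊤ if and only if GR° ⊢ A^⊤; consequently, GR⁻ ⊢ A^⊤ if and only if GR° ⊢ A. -/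
/-- The logic GRminus. -/
inductive GRminus : Formula → Prop
  | taut {A : Formula} : Taut A → GRminus A
  | k {A B : Formula} : GRminus (((A.imp B).box).imp ((A.box).imp (B.box)))
  | loeb {A : Formula} : GRminus ((((A.box).imp A).box).imp (A.box))
  | bbBox {A : Formula} : GRminus ((A.bb).imp (A.box))
  | boxBb {A : Formula} : GRminus ((A.box).imp ((A.bb).box))
  | ros {A : Formula} : GRminus ((A.box).imp ((Formula.falsum.box).or (A.bb)))
  | diaBb {A : Formula} : GRminus (((A.bb).dia).imp (A.dia))
  | mp {A B : Formula} : GRminus (A.imp B) → GRminus A → GRminus B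
  | nec {A : Formula} : GRminus A → GRminus (A.box)


/-- The logic GRcirc. -/
inductive GRcirc : Formula → Prop
  | taut {A : Formula} : Taut A → GRcirc A
  | k {A B : Formula} : GRcirc (((A.imp B).box).imp ((A.box).imp (B.box)))
  | loeb {A : Formula} : GRcirc ((((A.box).imp A).box).imp (A.box))
  | bbBox {A : Formula} : GRcirc ((A.bb).imp (A.box))
  | boxBb {A : Formula} : GRcirc ((A.box).imp ((A.bb).box))
  | ros {A : Formula} : GRcirc ((A.box).imp ((Formula.falsum.box).or (A.bb)))
  | diaBb {A : Formula} : GRcirc (((A.bb).dia).imp (A.dia))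
  | mp {A B : Formula} : GRcirc (A.imp B) → GRcirc A → GRcirc B
  | nec {A : Formula} : GRcirc A → GRcirc (A.box)
  | bbnec {A : Formula} : GRcirc A → GRcirc (A.bb)

open Classical in
/-- `A^⊤`: replace every `■`-outermost subformula `■D` of `A` with `GR° ⊢ D`
by `¬⊥`. -/
noncomputable def topTrans : Formula → Formula
  | .var n => .var n
  | .falsum => .falsum
  | .neg A => (topTrans A).neg
  | .or A B => (topTrans A).or (topTrans B)
  | .box A => (topTrans A).box
  | .bb A => if GRcirc A then Formula.falsum.neg else Formula.bb A

section Aux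

open Formula

/-! ### Tautology helpers -/

lemma taut_id (A : Formula) : Taut (A.imp A) := by
  intro v; simp [Formula.imp, evalProp]

lemma taut_k1 (A B : Formula) : Taut (A.imp (B.imp A)) := by
  intro v; simp only [Formula.imp, evalProp]
  cases evalProp v A <;> cases evalProp v B <;> simp

lemma taut_trans (A B C : Formula) :
    Taut ((A.imp B).imp ((B.imp C).imp (A.imp C))) := by
  intro v; simp only [Formula.imp, evalProp]
  cases evalProp v A <;> cases evalProp v B <;> cases evalProp v C <;> simp

lemma taut_contra (A B : Formula) :
    Taut ((A.imp B).imp ((B.neg).imp (A.neg))) := by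
  intro v; simp only [Formula.imp, evalProp]
  cases evalProp v A <;> cases evalProp v B <;> simp

lemma taut_or_mono (A B A' B' : Formula) :
    Taut ((A.imp A').imp ((B.imp B').imp ((A.or B).imp (A'.or B')))) := by
  intro v; simp only [Formula.imp, evalProp]
  cases evalProp v A <;> cases evalProp v B <;> cases evalProp v A' <;>
    cases evalProp v B' <;> simp

lemma taut_ntop (A : Formula) : Taut (A.imp (Formula.falsum.neg)) := by
  intro v; simp [Formula.imp, evalProp]

lemma taut_to_nn (A : Formula) :
    Taut (A.imp ((A.neg).imp (Formula.falsum.neg.neg))) := by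
  intro v; simp [Formula.imp, evalProp]

lemma taut_ros_top (A B : Formula) : Taut (A.imp (B.or Formula.falsum.neg)) := by
  intro v; simp [Formula.imp, evalProp]

lemma taut_ntop' : Taut (Formula.falsum.neg) := by
  intro v; simp [evalProp]

/-! ### Derived rules -/

lemma GRminus.imp_trans {A B C : Formula} (h1 : GRminus (A.imp B))
    (h2 : GRminus (B.imp C)) : GRminus (A.imp C) :=
  .mp (.mp (.taut (taut_trans A B C)) h1) h2

lemma GRminus.box_mono {A B : Formula} (h : GRminus ((A.imp B).box)) :
    GRminus ((A.box).imp (B.box)) := .mp .k h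

lemma GRcirc.imp_trans {A B C : Formula} (h1 : GRcirc (A.imp B))
    (h2 : GRcirc (B.imp C)) : GRcirc (A.imp C) :=
  .mp (.mp (.taut (taut_trans A B C)) h1) h2

lemma GRcirc.box_mono {A B : Formula} (h : GRcirc ((A.imp B).box)) :
    GRcirc ((A.box).imp (B.box)) := .mp .k h

/-! ### Basic facts about `topTrans` -/

lemma topTrans_neg (A : Formula) : topTrans A.neg = (topTrans A).neg := rfl
lemma topTrans_or (A B : Formula) : topTrans (A.or B) = (topTrans A).or (topTrans B) := rfl
lemma topTrans_box (A : Formula) : topTrans A.box = (topTrans A).box := rfl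
lemma topTrans_imp (A B : Formula) :
    topTrans (A.imp B) = (topTrans A).imp (topTrans B) := rfl
lemma topTrans_dia (A : Formula) : topTrans A.dia = (topTrans A).dia := rfl

lemma topTrans_idem (A : Formula) : topTrans (topTrans A) = topTrans A := by
  induction A with
  | var n => rfl
  | falsum => rfl
  | neg A ih => simp [topTrans, ih]
  | or A B ihA ihB => simp [topTrans, ihA, ihB]
  | box A ih => simp [topTrans, ih]
  | bb A =>
      by_cases h : GRcirc A
      · simp [topTrans, h]
      · simp [topTrans, h]

lemma evalProp_topTrans (v : Formula → Bool) (A : Formula) :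
    evalProp v (topTrans A) = evalProp (fun X => evalProp v (topTrans X)) A := by
  induction A with
  | var n => rfl
  | falsum => rfl
  | neg A ih => simp [topTrans, evalProp, ih]
  | or A B ihA ihB => simp [topTrans, evalProp, ihA, ihB]
  | box A ih => rfl
  | bb A => rfl

lemma Taut.topTrans {A : Formula} (h : Taut A) : Taut (topTrans A) := by
  intro v; rw [evalProp_topTrans]; exact h _

/-! ### Embedding GR⁻ into GR° -/

lemma GRminus.toGRcirc {A : Formula} (h : GRminus A) : GRcirc A := by
  induction h with
  | taut h => exact .taut h
  | k => exact .k
  | loeb => exact .loeb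
  | bbBox => exact .bbBox
  | boxBb => exact .boxBb
  | ros => exact .ros
  | diaBb => exact .diaBb
  | mp _ _ ih1 ih2 => exact .mp ih1 ih2
  | nec _ ih => exact .nec ih

/-! ### `GR° ⊢ A` implies `GR⁻ ⊢ □A` -/

lemma GRcirc.boxed {A : Formula} (h : GRcirc A) : GRminus (A.box) := by
  induction h with
  | taut h => exact .nec (.taut h)
  | k => exact .nec .k
  | loeb => exact .nec .loeb
  | bbBox => exact .nec .bbBox
  | boxBb => exact .nec .boxBb
  | ros => exact .nec .ros
  | diaBb => exact .nec .diaBb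
  | mp _ _ ih1 ih2 => exact .mp (.mp .k ih1) ih2
  | nec _ ih => exact .nec ih
  | bbnec _ ih => exact .mp .boxBb ih

/-! ### In GR°, `A` and `A^⊤` are provably equivalent -/

lemma GRcirc.equiv_topTrans (A : Formula) :
    GRcirc (A.imp (topTrans A)) ∧ GRcirc ((topTrans A).imp A) := by
  induction A with
  | var n => exact ⟨.taut (taut_id _), .taut (taut_id _)⟩
  | falsum => exact ⟨.taut (taut_id _), .taut (taut_id _)⟩
  | neg A ih =>
      exact ⟨.mp (.taut (taut_contra _ _)) ih.2, .mp (.taut (taut_contra _ _)) ih.1⟩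
  | or A B ihA ihB =>
      exact ⟨.mp (.mp (.taut (taut_or_mono A B (topTrans A) (topTrans B))) ihA.1) ihB.1,
             .mp (.mp (.taut (taut_or_mono (topTrans A) (topTrans B) A B)) ihA.2) ihB.2⟩
  | box A ih =>
      exact ⟨GRcirc.box_mono (.nec ih.1), GRcirc.box_mono (.nec ih.2)⟩
  | bb A =>
      by_cases h : GRcirc A
      · have e : topTrans A.bb = Formula.falsum.neg := by simp [topTrans, h]
        rw [e]
        exact ⟨.taut (taut_ntop _), .mp (.taut (taut_k1 A.bb Formula.falsum.neg)) (.bbnec h)⟩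
      · have e : topTrans A.bb = A.bb := by simp [topTrans, h]
        rw [e]
        exact ⟨.taut (taut_id _), .taut (taut_id _)⟩

/-- In GR⁻, `□A^⊤ → □A` and `□A → □A^⊤`. -/
lemma GRminus.boxTT (A : Formula) :
    GRminus (((topTrans A).box).imp (A.box)) ∧ GRminus ((A.box).imp ((topTrans A).box)) :=
  ⟨GRminus.box_mono (GRcirc.equiv_topTrans A).2.boxed,
   GRminus.box_mono (GRcirc.equiv_topTrans A).1.boxed⟩

/-! ### Main lemma: `GR° ⊢ A` implies `GR⁻ ⊢ A^⊤` -/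

lemma GRcirc.topTrans_GRminus {A : Formula} (h : GRcirc A) : GRminus (topTrans A) := by
  induction h with
  | @taut A h => exact .taut h.topTrans
  | @k A B => simp only [topTrans_imp, topTrans_box, topTrans_or, topTrans_neg, topTrans_dia]; exact .k
  | @loeb A => simp only [topTrans_imp, topTrans_box, topTrans_or, topTrans_neg, topTrans_dia]
               exact .loeb
  | @bbBox A =>
      simp only [topTrans_imp, topTrans_box, topTrans_or, topTrans_neg, topTrans_dia]
      by_cases h : GRcirc A
      · have e : topTrans A.bb = Formula.falsum.neg := by simp [topTrans, h]
        rw [e]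
        have htA : GRcirc (topTrans A) := .mp (GRcirc.equiv_topTrans A).1 h
        exact .mp (.taut (taut_k1 _ _)) htA.boxed
      · have e : topTrans A.bb = A.bb := by simp [topTrans, h]
        rw [e]
        exact GRminus.bbBox.imp_trans (GRminus.boxTT A).2
  | @boxBb A =>
      simp only [topTrans_imp, topTrans_box, topTrans_or, topTrans_neg, topTrans_dia]
      by_cases h : GRcirc A
      · have e : topTrans A.bb = Formula.falsum.neg := by simp [topTrans, h]
        rw [e]
        exact .mp (.taut (taut_k1 _ _)) (.nec (.taut taut_ntop'))
      · have e : topTrans A.bb = A.bb := by simp [topTrans, h]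
        rw [e]
        exact (GRminus.boxTT A).1.imp_trans GRminus.boxBb
  | @ros A =>
      simp only [topTrans_imp, topTrans_box, topTrans_or, topTrans_neg, topTrans_dia]
      by_cases h : GRcirc A
      · have e : topTrans A.bb = Formula.falsum.neg := by simp [topTrans, h]
        rw [e]
        exact .taut (taut_ros_top _ _)
      · have e : topTrans A.bb = A.bb := by simp [topTrans, h]
        have e2 : topTrans Formula.falsum = Formula.falsum := rfl
        rw [e, e2]
        exact (GRminus.boxTT A).1.imp_trans GRminus.ros
  | @diaBb A =>
      simp only [topTrans_imp, topTrans_box, topTrans_or, topTrans_neg, topTrans_dia]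
      by_cases h : GRcirc A
      · have e : topTrans A.bb = Formula.falsum.neg := by simp [topTrans, h]
        rw [e]
        -- goal: GRminus ((¬⊥).dia.imp ((topTrans A).dia))
        have htA : GRcirc (topTrans A) := .mp (GRcirc.equiv_topTrans A).1 h
        have h1 : GRminus ((topTrans A).box) := htA.boxed
        have h2 : GRminus (((topTrans A).neg.box).imp (Formula.falsum.neg.neg.box)) :=
          GRminus.box_mono (.mp (.mp .k (.nec (.taut (taut_to_nn (topTrans A))))) h1)
        exact .mp (.taut (taut_contra _ _)) h2
      · have e : topTrans A.bb = A.bb := by simp [topTrans, h]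
        rw [e]
        have h2 : GRminus (((topTrans A).neg.box).imp (A.neg.box)) :=
          GRminus.box_mono (GRcirc.mp (.taut (taut_contra A (topTrans A)))
            (GRcirc.equiv_topTrans A).1).boxed
        exact GRminus.diaBb.imp_trans (.mp (.taut (taut_contra _ _)) h2)
  | @mp A B _ _ ih1 ih2 =>
      simp only [topTrans_imp, topTrans_box, topTrans_or, topTrans_neg, topTrans_dia] at ih1
      exact .mp ih1 ih2
  | @nec A _ ih => exact .nec ih
  | @bbnec A hA _ =>
      have e : topTrans A.bb = Formula.falsum.neg := by simp [topTrans, hA]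
      rw [e]
      exact .taut taut_ntop'

end Aux

/-- `GR⁻ ⊢ A^⊤` iff `GR° ⊢ A^⊤`; consequently `GR⁻ ⊢ A^⊤` iff `GR° ⊢ A`. -/
theorem GRminus_topTrans_iff (A : Formula) :
    (GRminus (topTrans A) ↔ GRcirc (topTrans A)) ∧
    (GRminus (topTrans A) ↔ GRcirc A) := by
  refine ⟨⟨fun h => h.toGRcirc, fun h => ?_⟩,
          ⟨fun h => GRcirc.mp (GRcirc.equiv_topTrans A).2 h.toGRcirc,
           fun h => h.topTrans_GRminus⟩⟩
  have := h.topTrans_GRminus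
  rwa [topTrans_idem] at this
end
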